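/- Let a⁺ > 0 > a⁻ and let U⁻, U⁺, U* be reals with U* given. Define δ = minmod(−a⁻(U* − U⁻), a⁺(U⁺ − U*)), and set U^L = U* + δ/a⁻, U^R = U* + δ/a⁺. If U⁻ ≤ U* ≤ U⁺, then U⁻ ≤ U^L ≤ U* ≤ U^R ≤ U⁺; if U⁺ ≤ U* ≤ U⁻, then U⁺ ≤ U^R ≤ U* ≤ U^L ≤ U⁻. In particular, the subcell values U^L and U^R always lie between U⁻ and U⁺ whenever U* does. -/

import Mathlib

noncomputable def minmod (c₁ c₂ : ℝ) : ℝ :=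
  if 0 < c₁ ∧ 0 < c₂ then min c₁ c₂
  else if c₁ < 0 ∧ c₂ < 0 then max c₁ c₂
  else 0

lemma minmod_nonneg_bounds {a b : ℝ} (ha : 0 ≤ a) (hb : 0 ≤ b) :
    0 ≤ minmod a b ∧ minmod a b ≤ a ∧ minmod a b ≤ b := by
  unfold minmod
  split_ifs with h1 h2
  · exact ⟨le_min h1.1.le h1.2.le, min_le_left _ _, min_le_right _ _⟩
  · linarith [h2.1]
  · exact ⟨le_rfl, ha, hb⟩

lemma minmod_nonpos_bounds {a b : ℝ} (ha : a ≤ 0) (hb : b ≤ 0) :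
    minmod a b ≤ 0 ∧ a ≤ minmod a b ∧ b ≤ minmod a b := by
  unfold minmod
  split_ifs with h1 h2
  · linarith [h1.1]
  · exact ⟨max_le h2.1.le h2.2.le, le_max_left _ _, le_max_right _ _⟩
  · exact ⟨le_rfl, ha, hb⟩

theorem subcell_values_bound_preserving
    (ap am Um Up Ustar : ℝ) (hap : 0 < ap) (ham : am < 0)
    (δ UL UR : ℝ)
    (hδ : δ = minmod (-am * (Ustar - Um)) (ap * (Up - Ustar)))
    (hUL : UL = Ustar + δ / am) (hUR : UR = Ustar + δ / ap) :
    ((Um ≤ Ustar ∧ Ustar ≤ Up) →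
      Um ≤ UL ∧ UL ≤ Ustar ∧ Ustar ≤ UR ∧ UR ≤ Up) ∧
    ((Up ≤ Ustar ∧ Ustar ≤ Um) →
      Up ≤ UR ∧ UR ≤ Ustar ∧ Ustar ≤ UL ∧ UL ≤ Um) := by
  have hamne : am ≠ 0 := ne_of_lt ham
  have hapne : ap ≠ 0 := ne_of_gt hap
  constructor
  · rintro ⟨h1, h2⟩
    have ha : 0 ≤ -am * (Ustar - Um) := by nlinarith
    have hb : 0 ≤ ap * (Up - Ustar) := by nlinarith
    obtain ⟨hd0, hd1, hd2⟩ := hδ ▸ minmod_nonneg_bounds ha hb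
    have e1 : am * (UL - Ustar) = δ := by rw [hUL]; field_simp; ring
    have e2 : ap * (UR - Ustar) = δ := by rw [hUR]; field_simp; ring
    refine ⟨by nlinarith, by nlinarith, by nlinarith, by nlinarith⟩
  · rintro ⟨h1, h2⟩
    have ha : -am * (Ustar - Um) ≤ 0 := by nlinarith
    have hb : ap * (Up - Ustar) ≤ 0 := by nlinarith
    obtain ⟨hd0, hd1, hd2⟩ := hδ ▸ minmod_nonpos_bounds ha hb
    have e1 : am * (UL - Ustar) = δ := by rw [hUL]; field_simp; ring
    have e2 : ap * (UR - Ustar) = δ := by rw [hUR]; field_simp; ring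
    refine ⟨by nlinarith, by nlinarith, by nlinarith, by nlinarith⟩
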